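/- For every d ≥ 3, the small-Jordan-type polynomial F = x^d + y^d + y z^{d-1} ∈ ℂ[x,y,z] is irreducible in ℂ[x,y,z] and smooth: the only common zero (x,y,z) ∈ ℂ³ of ∂F/∂x, ∂F/∂y, ∂F/∂z is (0,0,0). -/

import Mathlib

open MvPolynomial

/-- For every `d ≥ 3` the small-Jordan-type polynomial
`x^d + y^d + y z^(d-1)` is irreducible in `ℂ[x,y,z]` and smooth. -/
theorem small_jordan_type_irreducible_smooth (d : ℕ) (hd : 3 ≤ d) :
    Irreducible ((X 0 ^ d + X 1 ^ d + X 1 * X 2 ^ (d - 1) : MvPolynomial (Fin 3) ℂ)) ∧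
    ∀ v : Fin 3 → ℂ,
      (∀ i, eval v (pderiv i
          (X 0 ^ d + X 1 ^ d + X 1 * X 2 ^ (d - 1) : MvPolynomial (Fin 3) ℂ)) = 0) →
      v = 0 := by
  constructor
  · -- Irreducibility via Eisenstein's criterion at the prime ideal (X 0) ⊂ ℂ[y,z]
    set e := MvPolynomial.finSuccEquiv ℂ 2 with he
    set c : MvPolynomial (Fin 2) ℂ := X 0 ^ d + X 0 * X 1 ^ (d - 1) with hc
    have hmap : e (X 0 ^ d + X 1 ^ d + X 1 * X 2 ^ (d - 1) : MvPolynomial (Fin 3) ℂ)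
        = Polynomial.X ^ d + Polynomial.C c := by
      have e1 : (1 : Fin 3) = Fin.succ 0 := rfl
      have e2 : (2 : Fin 3) = Fin.succ 1 := rfl
      rw [map_add, map_add, map_mul, map_pow, map_pow, map_pow, e1, e2,
        finSuccEquiv_X_zero, finSuccEquiv_X_succ, finSuccEquiv_X_succ, hc]
      push_cast [map_add, map_mul, map_pow]
      ring
    rw [← MulEquiv.irreducible_iff e, hmap]
    have hX : Prime (X 0 : MvPolynomial (Fin 2) ℂ) := by
      rw [← MulEquiv.prime_iff (MvPolynomial.finSuccEquiv ℂ 1).toMulEquiv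
        (p := (X 0 : MvPolynomial (Fin 2) ℂ))]
      show Prime ((MvPolynomial.finSuccEquiv ℂ 1) (X 0))
      rw [finSuccEquiv_X_zero]
      exact Polynomial.prime_X
    set P : Ideal (MvPolynomial (Fin 2) ℂ) := Ideal.span {X 0} with hP
    have hPprime : P.IsPrime := (Ideal.span_singleton_prime hX.ne_zero).mpr hX
    have hmonic : (Polynomial.X ^ d + Polynomial.C c).Monic :=
      Polynomial.monic_X_pow_add_C c (by omega)
    have hdeg : (Polynomial.X ^ d + Polynomial.C c).natDegree = d :=
      Polynomial.natDegree_X_pow_add_C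
    have hndvd : ¬ (X 0 : MvPolynomial (Fin 2) ℂ) ∣ X 1 := by
      intro ⟨t, ht⟩
      have := congrArg (eval ![0, 1]) ht
      simp at this
    have heis : (Polynomial.X ^ d + Polynomial.C c).IsEisensteinAt P := by
      refine hmonic.isEisensteinAt_of_mem_of_notMem hPprime.ne_top ?_ ?_
      · intro n hn
        rw [hdeg] at hn
        rw [Polynomial.coeff_add, Polynomial.coeff_X_pow, if_neg (by omega), zero_add,
          Polynomial.coeff_C]
        split
        · rw [hP, Ideal.mem_span_singleton, hc]
          exact dvd_add (dvd_pow_self _ (by omega)) (dvd_mul_right _ _)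
        · exact P.zero_mem
      · rw [Polynomial.coeff_add, Polynomial.coeff_X_pow, if_neg (by omega), zero_add,
          Polynomial.coeff_C, if_pos rfl, hP, Ideal.span_singleton_pow, Ideal.mem_span_singleton]
        intro hdvd
        have h1 : (X 0 : MvPolynomial (Fin 2) ℂ) ^ 2 ∣ X 0 ^ d := pow_dvd_pow _ (by omega)
        have h2 : (X 0 : MvPolynomial (Fin 2) ℂ) ^ 2 ∣ X 0 * X 1 ^ (d - 1) :=
          (dvd_add_right h1).mp hdvd
        rw [pow_two] at h2
        have h3 : (X 0 : MvPolynomial (Fin 2) ℂ) ∣ X 1 ^ (d - 1) :=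
          (mul_dvd_mul_iff_left hX.ne_zero).mp h2
        exact hndvd (hX.dvd_of_dvd_pow h3)
    exact heis.irreducible hPprime hmonic.isPrimitive (by rw [hdeg]; omega)
  · -- Smoothness
    intro v hv
    have h0 := hv 0
    have h1 := hv 1
    have h2 := hv 2
    simp [pderiv_X, pderiv_mul, pderiv_pow] at h0 h1 h2
    have hdc : (d : ℂ) ≠ 0 := Nat.cast_ne_zero.mpr (by omega)
    have hv0 : v 0 = 0 := by
      rcases h0 with h | h
      · omega
      · exact h.1
    have hv12 : v 1 = 0 ∧ v 2 = 0 := by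
      rcases h2 with h | h | h
      · refine ⟨h, ?_⟩
        rw [h, zero_pow (by omega : d - 1 ≠ 0), mul_zero, zero_add] at h1
        exact pow_eq_zero_iff (by omega : d - 1 ≠ 0) |>.mp h1
      · omega
      · have hz := h.1
        rw [hz, zero_pow (by omega : d - 1 ≠ 0), add_zero, mul_eq_zero] at h1
        rcases h1 with h1 | h1
        · exact absurd h1 hdc
        · exact ⟨pow_eq_zero_iff (by omega : d - 1 ≠ 0) |>.mp h1, hz⟩
    funext i
    fin_cases i <;> simp [hv0, hv12.1, hv12.2]
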